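/- Let f₀, f₁ be finitely supported probability distributions on a metric space (X,d) and let C(f₀,f₁) be the union of supports of all W₁-optimal couplings. If (x₀,y₀), …, (x_p,y_p) ∈ C(f₀,f₁), then Σ_{i=0}^p d(x_i,y_i) ≤ d(x₀,y_p) + Σ_{i=0}^{p−1} d(x_{i+1},y_i). -/

import Mathlib

open scoped BigOperators Classical

noncomputable section

variable {X : Type*} [MetricSpace X]

/-- π is a coupling of the finitely supported distributions f₀ and f₁. -/
def IsCoupling (f₀ f₁ : X →₀ ℝ) (π : X × X →₀ ℝ) : Prop :=
  (∀ p, 0 ≤ π p) ∧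
    (∀ x, (π.sum fun p v => if p.1 = x then v else 0) = f₀ x) ∧
    (∀ y, (π.sum fun p v => if p.2 = y then v else 0) = f₁ y)

/-- Transport cost of a coupling. -/
def cost (π : X × X →₀ ℝ) : ℝ := π.sum fun p v => dist p.1 p.2 * v

/-- π is a W₁-optimal coupling of f₀ and f₁. -/
def IsOptimalCoupling (f₀ f₁ : X →₀ ℝ) (π : X × X →₀ ℝ) : Prop :=
  IsCoupling f₀ f₁ π ∧ ∀ π', IsCoupling f₀ f₁ π' → cost π ≤ cost π'

/-- C(f₀,f₁): union of the supports of all W₁-optimal couplings. -/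
def commonSupport (f₀ f₁ : X →₀ ℝ) : Set (X × X) :=
  {p | ∃ π, IsOptimalCoupling f₀ f₁ π ∧ 0 < π p}

/-- f is a (finitely supported) probability distribution. -/
def IsProb (f : X →₀ ℝ) : Prop := (∀ x, 0 ≤ f x) ∧ (f.sum fun _ v => v) = 1

noncomputable def wsum (g : X × X → ℝ) : (X × X →₀ ℝ) →ₗ[ℝ] ℝ where
  toFun π := π.sum fun p v => g p * v
  map_add' a b := Finsupp.sum_add_index' (fun _ => mul_zero _) (fun p b₁ b₂ => mul_add _ _ _)
  map_smul' c π := by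
    show (c • π).sum _ = _
    rw [Finsupp.sum_smul_index (fun _ => mul_zero _)]
    rw [smul_eq_mul, Finsupp.mul_sum]
    exact Finsupp.sum_congr fun p _ => by simp only [RingHom.id_apply]; ring

omit [MetricSpace X] in
lemma wsum_single (g : X × X → ℝ) (q : X × X) (r : ℝ) : wsum g (Finsupp.single q r) = g q * r :=
  Finsupp.sum_single_index (mul_zero _)

def gfst (x₀ : X) : X × X → ℝ := fun q => if q.1 = x₀ then 1 else 0
def gsnd (y₀ : X) : X × X → ℝ := fun q => if q.2 = y₀ then 1 else 0

omit [MetricSpace X] in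
lemma wsum_fst_eq (x₀ : X) (π : X × X →₀ ℝ) :
    wsum (gfst x₀) π = π.sum fun p v => if p.1 = x₀ then v else 0 :=
  Finsupp.sum_congr fun p _ => by by_cases h : p.1 = x₀ <;> simp [gfst, h]

omit [MetricSpace X] in
lemma wsum_snd_eq (y₀ : X) (π : X × X →₀ ℝ) :
    wsum (gsnd y₀) π = π.sum fun p v => if p.2 = y₀ then v else 0 :=
  Finsupp.sum_congr fun p _ => by by_cases h : p.2 = y₀ <;> simp [gsnd, h]

lemma cost_eq (π : X × X →₀ ℝ) : cost π = wsum (fun q => dist q.1 q.2) π := rfl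

theorem cyclic_monotonicity_of_common_support
    (f₀ f₁ : X →₀ ℝ) (h₀ : IsProb f₀) (h₁ : IsProb f₁)
    (p : ℕ) (x y : ℕ → X)
    (hmem : ∀ i ≤ p, (x i, y i) ∈ commonSupport f₀ f₁) :
    ∑ i ∈ Finset.range (p + 1), dist (x i) (y i) ≤
      dist (x 0) (y p) + ∑ i ∈ Finset.range p, dist (x (i + 1)) (y i) := by
  classical
  set n := p + 1 with hn
  have hm : ∀ i : ℕ, ∃ π, IsOptimalCoupling f₀ f₁ π ∧ 0 < π (x (min i p), y (min i p)) :=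
    fun i => hmem (min i p) (min_le_right _ _)
  choose π hopt hpos using hm
  have hcosteq : ∀ i, cost (π i) = cost (π 0) := fun i =>
    le_antisymm ((hopt i).2 _ (hopt 0).1) ((hopt 0).2 _ (hopt i).1)
  obtain ⟨πb, hπb⟩ : ∃ z : X × X →₀ ℝ, z = (n : ℝ)⁻¹ • ∑ i ∈ Finset.range n, π i := ⟨_, rfl⟩
  have hnpos : (0:ℝ) < n := by positivity
  have hninv : (0:ℝ) < (n:ℝ)⁻¹ := by positivity
  have hπbapp : ∀ q, πb q = (n:ℝ)⁻¹ * ∑ i ∈ Finset.range n, π i q := by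
    intro q; simp [hπb, Finsupp.smul_apply, Finsupp.finset_sum_apply]
  have hπbnn : ∀ q, 0 ≤ πb q := by
    intro q; rw [hπbapp]
    exact mul_nonneg hninv.le (Finset.sum_nonneg fun i _ => (hopt i).1.1 q)
  have key1 : ∀ x₀, (πb.sum fun p v => if p.1 = x₀ then v else 0) = f₀ x₀ := by
    intro x₀
    rw [← wsum_fst_eq, hπb, map_smul, map_sum, smul_eq_mul]
    have h2 : ∀ i ∈ Finset.range n, wsum (gfst x₀) (π i) = f₀ x₀ := fun i _ => by
      rw [wsum_fst_eq]; exact (hopt i).1.2.1 x₀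
    rw [Finset.sum_congr rfl h2, Finset.sum_const, Finset.card_range, nsmul_eq_mul]
    field_simp
  have key2 : ∀ y₀, (πb.sum fun p v => if p.2 = y₀ then v else 0) = f₁ y₀ := by
    intro y₀
    rw [← wsum_snd_eq, hπb, map_smul, map_sum, smul_eq_mul]
    have h2 : ∀ i ∈ Finset.range n, wsum (gsnd y₀) (π i) = f₁ y₀ := fun i _ => by
      rw [wsum_snd_eq]; exact (hopt i).1.2.2 y₀
    rw [Finset.sum_congr rfl h2, Finset.sum_const, Finset.card_range, nsmul_eq_mul]
    field_simp
  have hcostb : cost πb = cost (π 0) := by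
    rw [cost_eq, hπb, map_smul, map_sum, smul_eq_mul]
    have h2 : ∀ i ∈ Finset.range n, wsum (fun q : X × X => dist q.1 q.2) (π i) = cost (π 0) :=
      fun i _ => by rw [← cost_eq]; exact hcosteq i
    rw [Finset.sum_congr rfl h2, Finset.sum_const, Finset.card_range, nsmul_eq_mul]
    field_simp
  have hπbopt : IsOptimalCoupling f₀ f₁ πb :=
    ⟨⟨hπbnn, key1, key2⟩, fun π' h' => by rw [hcostb]; exact (hopt 0).2 π' h'⟩
  have hbpos : ∀ i ∈ Finset.range n, 0 < πb (x i, y i) := by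
    intro i hi
    have hip : i ≤ p := Nat.lt_succ_iff.mp (Finset.mem_range.mp hi)
    rw [hπbapp]
    apply mul_pos hninv
    apply Finset.sum_pos' (fun j _ => (hopt j).1.1 _) ⟨i, hi, ?_⟩
    have := hpos i; rwa [min_eq_left hip] at this
  have hne : (Finset.range n).Nonempty := ⟨0, by simp [hn]⟩
  obtain ⟨m, hmdef⟩ : ∃ z : ℝ, z = (Finset.range n).inf' hne (fun i => πb (x i, y i)) := ⟨_, rfl⟩
  have hmpos : 0 < m := by
    rw [hmdef, Finset.lt_inf'_iff]
    exact hbpos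
  have hmle : ∀ i ∈ Finset.range n, m ≤ πb (x i, y i) := fun i hi => hmdef ▸ Finset.inf'_le _ hi
  obtain ⟨ε, hεdef⟩ : ∃ z : ℝ, z = m / n := ⟨_, rfl⟩
  have hεpos : 0 < ε := hεdef ▸ div_pos hmpos hnpos
  have hεn : ε * n = m := by rw [hεdef]; field_simp
  obtain ⟨D, hD⟩ : ∃ z : X × X →₀ ℝ, z =
      (Finsupp.single (x 0, y p) (1:ℝ) + ∑ i ∈ Finset.range p, Finsupp.single (x (i+1), y i) (1:ℝ))
        - ∑ i ∈ Finset.range n, Finsupp.single (x i, y i) (1:ℝ) := ⟨_, rfl⟩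
  obtain ⟨A, hAdef⟩ : ∃ z : X × X → ℝ, z = fun q =>
      (if (x 0, y p) = q then (1:ℝ) else 0)
        + ∑ i ∈ Finset.range p, (if (x (i+1), y i) = q then (1:ℝ) else 0) := ⟨_, rfl⟩
  obtain ⟨B, hBdef⟩ : ∃ z : X × X → ℝ, z = fun q =>
      ∑ i ∈ Finset.range n, (if (x i, y i) = q then (1:ℝ) else 0) := ⟨_, rfl⟩
  have hDq : ∀ q, D q = A q - B q := by
    intro q
    simp [hD, hAdef, hBdef, Finsupp.sub_apply, Finsupp.add_apply, Finsupp.finset_sum_apply,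
      Finsupp.single_apply]
  have hA : ∀ q, 0 ≤ A q := by
    intro q
    rw [hAdef]
    apply add_nonneg
    · split <;> norm_num
    · exact Finset.sum_nonneg fun i _ => by split <;> norm_num
  have hB : ∀ q, B q ≤ n := by
    intro q
    rw [hBdef]
    calc (∑ i ∈ Finset.range n, if (x i, y i) = q then (1:ℝ) else 0)
        ≤ ∑ _i ∈ Finset.range n, (1:ℝ) :=
          Finset.sum_le_sum fun i _ => by split <;> norm_num
      _ = n := by simp
  obtain ⟨π', hπ'⟩ : ∃ z : X × X →₀ ℝ, z = πb + ε • D := ⟨_, rfl⟩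
  have hπ'app : ∀ q, π' q = πb q + ε * (A q - B q) := by
    intro q; rw [hπ', Finsupp.add_apply, Finsupp.smul_apply, hDq, smul_eq_mul]
  have hπ'nn : ∀ q, 0 ≤ π' q := by
    intro q
    rw [hπ'app]
    by_cases hq : ∃ i ∈ Finset.range n, (x i, y i) = q
    · obtain ⟨i, hi, hqe⟩ := hq
      have h1 : m ≤ πb q := hqe ▸ hmle i hi
      have h2 : ε * B q ≤ ε * n := mul_le_mul_of_nonneg_left (hB q) hεpos.le
      have h3 : 0 ≤ ε * A q := mul_nonneg hεpos.le (hA q)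
      nlinarith [hεn]
    · have hB0 : B q = 0 := by
        rw [hBdef]
        exact Finset.sum_eq_zero fun i hi => by
          rw [if_neg]; exact fun h => hq ⟨i, hi, h⟩
      rw [hB0]
      have h3 : 0 ≤ ε * A q := mul_nonneg hεpos.le (hA q)
      have := hπbnn q
      linarith
  have hwD1 : ∀ x₀, wsum (gfst x₀) D = 0 := by
    intro x₀
    rw [hD, map_sub, map_add, map_sum, map_sum]
    simp only [wsum_single, mul_one]
    rw [hn, Finset.sum_range_succ']
    simp only [gfst]
    ring
  have hwD2 : ∀ y₀, wsum (gsnd y₀) D = 0 := by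
    intro y₀
    rw [hD, map_sub, map_add, map_sum, map_sum]
    simp only [wsum_single, mul_one]
    rw [hn, Finset.sum_range_succ]
    simp only [gsnd]
    ring
  have hπ'coup : IsCoupling f₀ f₁ π' := by
    refine ⟨hπ'nn, fun x₀ => ?_, fun y₀ => ?_⟩
    · rw [← wsum_fst_eq, hπ', map_add, map_smul, hwD1, smul_zero, add_zero, wsum_fst_eq]
      exact key1 x₀
    · rw [← wsum_snd_eq, hπ', map_add, map_smul, hwD2, smul_zero, add_zero, wsum_snd_eq]
      exact key2 y₀
  have hwDc : wsum (fun q : X × X => dist q.1 q.2) D =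
      (dist (x 0) (y p) + ∑ i ∈ Finset.range p, dist (x (i+1)) (y i))
        - ∑ i ∈ Finset.range n, dist (x i) (y i) := by
    rw [hD, map_sub, map_add, map_sum, map_sum]
    simp only [wsum_single, mul_one]
  have hle : cost πb ≤ cost π' := hπbopt.2 π' hπ'coup
  have hcost' : cost π' = cost πb + ε * wsum (fun q : X × X => dist q.1 q.2) D := by
    rw [cost_eq, hπ', map_add, map_smul, smul_eq_mul, ← cost_eq]
  rw [hcost'] at hle
  have h0 : 0 ≤ ε * wsum (fun q : X × X => dist q.1 q.2) D := by linarith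
  have h1 : 0 ≤ wsum (fun q : X × X => dist q.1 q.2) D := nonneg_of_mul_nonneg_right h0 hεpos
  rw [hwDc] at h1
  rw [hn] at h1
  linarith
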